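/- arXiv:1309.0577 — 4 statements merged into one kernel-verified Lean document; each statement's English description precedes it below -/
import Mathlib

section
/- Let p be a prime, let c₀ ≥ 1 be a natural number, and let λ ∈ ℤ_p. Assume that either (i) λ is the image of a natural number, or (ii) the quotient λ^{m}/m tends to infinity as m → ∞. Then there exists a strictly increasing sequence of positive integers k₀ < k₁ < k₂ < ⋯ such that for every i: (a) k_i ≥ c₀·(2 + ⌈log_p k_{i+1}⌉) + 1, and (b) there is no natural number n with k_i ≤ n < k_{i+1} such that p^{⌈log_p k_{i+1}⌉} divides λ − n in ℤ_p. -/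
private lemma grow_aux (c₀ : ℕ) : ∀ j, 4 * c₀ + 5 ≤ j → c₀ * (j + 3) + 1 ≤ 2 ^ j := by
  intro j hj
  induction j, hj using Nat.le_induction with
  | base =>
    have h : c₀ < 2 ^ c₀ := Nat.lt_two_pow_self (n := c₀)
    have h1 : 1 ≤ 2 ^ c₀ := Nat.one_le_two_pow
    have e : (2:ℕ) ^ 5 * (2 ^ c₀) ^ 4 = 2 ^ (4 * c₀ + 5) := by
      rw [← pow_mul, ← pow_add]; congr 1; omega
    rw [← e]
    have ht1 : 2 ^ c₀ ≤ (2 ^ c₀) ^ 4 := Nat.le_self_pow (by norm_num) _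
    have ht2 : (2 ^ c₀) * (2 ^ c₀) ≤ (2 ^ c₀) ^ 4 := by nlinarith
    nlinarith
  | succ j hj ih =>
    have hcj : c₀ ≤ 2 ^ j := le_of_lt (lt_of_le_of_lt (by omega) (Nat.lt_two_pow_self (n := j)))
    calc c₀ * (j + 1 + 3) + 1 = (c₀ * (j + 3) + 1) + c₀ := by ring
      _ ≤ 2 ^ j + c₀ := by omega
      _ ≤ 2 ^ j + 2 ^ j := by omega
      _ = 2 ^ (j + 1) := by ring

/-- Lemma 4.2 (for `λ ∈ ℤ_p`): under condition (*), there is a strictly increasing sequence of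
positive integers `k₀ < k₁ < ⋯` such that `k i ≥ c₀ (2 + ⌈log_p k_{i+1}⌉) + 1` and no natural
number in `[k i, k (i+1))` is congruent to `λ` modulo `p^{⌈log_p k_{i+1}⌉}`. -/
theorem exists_good_sequence_padicInt
    {p : ℕ} [Fact p.Prime] (c₀ : ℕ) (hc₀ : 1 ≤ c₀) (l : ℤ_[p])
    (hl : (∃ n : ℕ, l = n) ∨
      Filter.Tendsto (fun m : ℕ => (l.appr m : ℝ) / (m : ℝ)) Filter.atTop Filter.atTop) :
    ∃ k : ℕ → ℕ, StrictMono k ∧ (∀ i, 0 < k i) ∧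
      ∀ i, c₀ * (2 + Nat.clog p (k (i + 1))) + 1 ≤ k i ∧
        ¬ ∃ n : ℕ, k i ≤ n ∧ n < k (i + 1) ∧
          (p : ℤ_[p]) ^ (Nat.clog p (k (i + 1))) ∣ (l - n) := by
  have hp : 1 < p := (Fact.out : p.Prime).one_lt
  -- divisibility in ℤ_[p] in terms of appr
  have key : ∀ m n : ℕ, ((p : ℤ_[p]) ^ m ∣ (l - n)) ↔ ((p : ℤ) ^ m ∣ ((l.appr m : ℤ) - n)) := by
    intro m n
    have h1 : (p : ℤ_[p]) ^ m ∣ (l - l.appr m) := by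
      have := l.appr_spec m
      rwa [Ideal.mem_span_singleton] at this
    have h2 : (l - n) = (l - l.appr m) + ((((l.appr m : ℤ) - n : ℤ)) : ℤ_[p]) := by
      push_cast; ring
    rw [h2]
    constructor
    · intro h
      have h3 : (p : ℤ_[p]) ^ m ∣ ((((l.appr m : ℤ) - n : ℤ)) : ℤ_[p]) := by
        have := dvd_sub h h1
        simpa using this
      have := (PadicInt.pow_p_dvd_int_iff m ((l.appr m : ℤ) - n)).mp h3
      exact_mod_cast this
    · intro h
      have h3 : (p : ℤ_[p]) ^ m ∣ ((((l.appr m : ℤ) - n : ℤ)) : ℤ_[p]) :=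
        (PadicInt.pow_p_dvd_int_iff m ((l.appr m : ℤ) - n)).mpr (by exact_mod_cast h)
      exact dvd_add h1 h3
  -- reduce to a one-step existence statement
  have main : ∃ N : ℕ, 1 ≤ N ∧ ∀ a, N ≤ a → ∃ b, a < b ∧ c₀ * (2 + Nat.clog p b) + 1 ≤ a ∧
      ¬ ∃ n : ℕ, a ≤ n ∧ n < b ∧ (p : ℤ_[p]) ^ (Nat.clog p b) ∣ (l - n) := by
    rcases hl with ⟨n₀, rfl⟩ | hT
    · -- case (i): l is a natural number
      refine ⟨max (n₀ + 1) (p ^ (4 * c₀ + 5)), le_trans (by omega) (le_max_left _ _), ?_⟩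
      intro a ha
      set m := Nat.clog p (a + 1) with hm
      refine ⟨p ^ m, ?_, ?_, ?_⟩
      · exact lt_of_lt_of_le (Nat.lt_succ_self a) (Nat.le_pow_clog hp _)
      · rw [Nat.clog_pow p m hp]
        have hmax := le_max_right (n₀ + 1) (p ^ (4 * c₀ + 5))
        have hma : p ^ (4 * c₀ + 5) < a + 1 := by omega
        have hm6 : 4 * c₀ + 5 < m := (Nat.lt_clog_iff_pow_lt hp).mpr hma
        have hpred : p ^ (m - 1) < a + 1 :=
          Nat.pow_pred_clog_lt_self hp (by omega)
        have hg : c₀ * ((m - 1) + 3) + 1 ≤ 2 ^ (m - 1) := grow_aux c₀ (m - 1) (by omega)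
        have h2p : 2 ^ (m - 1) ≤ p ^ (m - 1) := Nat.pow_le_pow_left hp _
        have he : 2 + m = (m - 1) + 3 := by omega
        rw [he]
        omega
      · rintro ⟨n, hn1, hn2, hdv⟩
        rw [Nat.clog_pow p m hp] at hdv
        have h1 := (key m n).mp hdv
        have h0 := (key m n₀).mp (by simp)
        obtain ⟨u, hu⟩ := h0
        obtain ⟨v, hv⟩ := h1
        have h : (p : ℤ) ^ m ∣ ((n : ℤ) - (n₀ : ℤ)) :=
          ⟨u - v, by linear_combination hu - hv⟩
        have hmax := le_max_left (n₀ + 1) (p ^ (4 * c₀ + 5))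
        have hnn : (n₀ : ℤ) < n := by exact_mod_cast (show n₀ < n by omega)
        have hle : (p : ℤ) ^ m ≤ (n : ℤ) - n₀ := Int.le_of_dvd (by omega) h
        have hlt : (n : ℤ) < (p : ℤ) ^ m := by exact_mod_cast hn2
        have hn₀0 : (0:ℤ) ≤ (n₀ : ℤ) := Int.natCast_nonneg n₀
        linarith
    · -- case (ii): appr m / m → ∞
      obtain ⟨M, hM⟩ := Filter.eventually_atTop.mp
        (hT.eventually_ge_atTop ((2 * c₀ + 1 : ℕ) : ℝ))
      have hgrow : ∀ m, max M 1 ≤ m → (2 * c₀ + 1) * m ≤ l.appr m := by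
        intro m hm
        have h1 : 1 ≤ m := le_trans (le_max_right _ _) hm
        have h2 := hM m (le_trans (le_max_left _ _) hm)
        have hmpos : (0 : ℝ) < m := by exact_mod_cast h1
        rw [le_div_iff₀ hmpos] at h2
        exact_mod_cast h2
      set M' := max M 1 with hM'
      refine ⟨max (c₀ * (M' + 2) + 1) (6 * c₀ + 2), le_trans (by omega) (le_max_left _ _), ?_⟩
      intro a ha
      have hQ : ∃ m, M' ≤ m ∧ a < l.appr m := by
        refine ⟨max M' (a + 1), le_max_left _ _, ?_⟩
        have h0 := hgrow _ (le_max_left M' (a + 1))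
        have h1 : a + 1 ≤ max M' (a + 1) := le_max_right _ _
        have h2 : max M' (a + 1) ≤ (2 * c₀ + 1) * max M' (a + 1) :=
          Nat.le_mul_of_pos_left _ (by omega)
        omega
      classical
      set m' := Nat.find hQ with hm'
      obtain ⟨hm'M, hab⟩ : M' ≤ m' ∧ a < l.appr m' := Nat.find_spec hQ
      set b := l.appr m' with hb
      have hm''le : Nat.clog p b ≤ m' := by
        have h1 : b ≤ p ^ m' := le_of_lt (l.appr_lt m')
        calc Nat.clog p b ≤ Nat.clog p (p ^ m') := Nat.clog_mono_right p h1
          _ = m' := Nat.clog_pow p m' hp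
      have hM'1 : 1 ≤ M' := le_max_right M 1
      refine ⟨b, hab, ?_, ?_⟩
      · -- size condition
        have hgoal : c₀ * (2 + Nat.clog p b) ≤ c₀ * (2 + m') :=
          Nat.mul_le_mul_left _ (by omega)
        have hsuff : c₀ * (2 + m') + 1 ≤ a := by
          rcases Nat.eq_or_lt_of_le hm'M with heq | hlt
          · have h4 := le_max_left (c₀ * (M' + 2) + 1) (6 * c₀ + 2)
            have e : c₀ * (2 + m') = c₀ * (M' + 2) := by rw [← heq]; ring
            omega
          · obtain ⟨t, ht⟩ : ∃ t, m' = t + 1 := ⟨m' - 1, by omega⟩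
            have hmin := Nat.find_min hQ (show t < m' by omega)
            push_neg at hmin
            have h1 : l.appr t ≤ a := hmin (by omega)
            have h2 : (2 * c₀ + 1) * t ≤ l.appr t := hgrow _ (by omega)
            have h3 : 6 * c₀ + 2 ≤ a := le_trans (le_max_right _ _) ha
            rw [ht]
            nlinarith
        omega
      · -- congruence condition
        rintro ⟨n, hn1, hn2, hdv⟩
        have h1 := (key (Nat.clog p b) n).mp hdv
        have hnb : n < p ^ (Nat.clog p b) := lt_of_lt_of_le hn2 (Nat.le_pow_clog hp b)
        have happ : l.appr (Nat.clog p b) < p ^ (Nat.clog p b) := l.appr_lt _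
        have hn0 : n = l.appr (Nat.clog p b) := by
          have habs : |((l.appr (Nat.clog p b) : ℤ) - n)| < (p : ℤ) ^ (Nat.clog p b) := by
            rw [abs_sub_lt_iff]
            have e1 : (l.appr (Nat.clog p b) : ℤ) < (p : ℤ) ^ (Nat.clog p b) := by
              exact_mod_cast happ
            have e2 : (n : ℤ) < (p : ℤ) ^ (Nat.clog p b) := by exact_mod_cast hnb
            constructor <;> omega
          have := Int.eq_zero_of_abs_lt_dvd h1 habs
          omega
        have hdvd2 : (p : ℤ) ^ (Nat.clog p b) ∣ ((b : ℤ) - (l.appr (Nat.clog p b) : ℤ)) := by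
          have ha' : (p : ℤ_[p]) ^ (Nat.clog p b) ∣ (l - l.appr m') := by
            have h := l.appr_spec m'
            rw [Ideal.mem_span_singleton] at h
            exact dvd_trans (pow_dvd_pow _ hm''le) h
          have ha'' : (p : ℤ_[p]) ^ (Nat.clog p b) ∣ (l - l.appr (Nat.clog p b)) := by
            have h := l.appr_spec (Nat.clog p b)
            rwa [Ideal.mem_span_singleton] at h
          have h3 : (p : ℤ_[p]) ^ (Nat.clog p b) ∣
              (((b : ℤ) - (l.appr (Nat.clog p b) : ℤ) : ℤ) : ℤ_[p]) := by
            have h4 := dvd_sub ha'' ha'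
            have e : (l - l.appr (Nat.clog p b)) - (l - l.appr m') =
                (((b : ℤ) - (l.appr (Nat.clog p b) : ℤ) : ℤ) : ℤ_[p]) := by
              push_cast; ring
            rwa [e] at h4
          have := (PadicInt.pow_p_dvd_int_iff _ _).mp h3
          exact_mod_cast this
        have hage : 1 ≤ a := by
          have := le_max_left (c₀ * (M' + 2) + 1) (6 * c₀ + 2); omega
        have hpos : (0:ℤ) < (b : ℤ) - (l.appr (Nat.clog p b) : ℤ) := by
          have h5 : (l.appr (Nat.clog p b) : ℤ) < (b:ℤ) := by
            exact_mod_cast (show l.appr (Nat.clog p b) < b by omega)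
          omega
        have hle := Int.le_of_dvd hpos hdvd2
        have hble : (b : ℤ) ≤ (p : ℤ) ^ (Nat.clog p b) := by
          exact_mod_cast Nat.le_pow_clog hp b
        have happ1 : (1:ℤ) ≤ (l.appr (Nat.clog p b) : ℤ) := by
          exact_mod_cast (show 1 ≤ l.appr (Nat.clog p b) by omega)
        linarith
  obtain ⟨N, hN1, step⟩ := main
  choose F hF1 hF2 hF3 using step
  let aux : ℕ → {a : ℕ // N ≤ a} := fun i =>
    Nat.rec ⟨N, le_rfl⟩ (fun _ prev => ⟨F prev.1 prev.2, le_trans prev.2 (hF1 prev.1 prev.2).le⟩) i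
  refine ⟨fun i => (aux i).1, ?_, ?_, ?_⟩
  · apply strictMono_nat_of_lt_succ
    intro i
    exact hF1 (aux i).1 (aux i).2
  · intro i
    exact lt_of_lt_of_le hN1 (aux i).2
  · intro i
    exact ⟨hF2 (aux i).1 (aux i).2, hF3 (aux i).1 (aux i).2⟩
end

section
/- Let p be a prime, let L be a normed field that is a normed ℚ_p-algebra and is finite-dimensional over ℚ_p, let c₀ ≥ 1 be a natural number, and let λ ∈ L be an element that is not in the image of ℤ_p under the canonical map ℤ_p → ℚ_p → L. Then there exists a strictly increasing sequence of positive integers k₀ < k₁ < k₂ < ⋯ such that for every i: (a) k_i ≥ c₀·(2 + ⌈log_p k_{i+1}⌉) + 1, and (b) for every integer n with k_i ≤ n < k_{i+1} one has ‖λ − n‖ > p^{−⌈log_p k_{i+1}⌉} (i.e. no such integer n is congruent to λ modulo p^{⌈log_p k_{i+1}⌉}). -/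
private lemma sq_le_two_pow : ∀ m : ℕ, 4 ≤ m → m * m ≤ 2 ^ m := by
  intro m hm
  induction m with
  | zero => omega
  | succ n ih =>
    rcases Nat.lt_or_ge n 4 with h | h
    · have hn : n = 3 := by omega
      subst hn; norm_num
    · have h1 := ih (by omega)
      have : (n + 1) * (n + 1) ≤ 2 * (n * n) := by nlinarith
      calc (n + 1) * (n + 1) ≤ 2 * (n * n) := this
        _ ≤ 2 * 2 ^ n := by omega
        _ = 2 ^ (n + 1) := by ring

private lemma lin_le_two_pow (c m : ℕ) (h : 2 * c + 6 ≤ m) : c * (m + 3) + 1 ≤ 2 ^ m := by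
  have h1 : c * (m + 3) + 1 ≤ m * m := by nlinarith
  have h2 : m * m ≤ 2 ^ m := sq_le_two_pow m (by omega)
  omega

/-- Lemma 4.2 in case (1) of condition (*): if `λ` lies in a finite extension `L` of `ℚ_p`
but not in (the image of) `ℤ_p`, then there is a strictly increasing sequence of positive
integers `k₀ < k₁ < ⋯` with `k i ≥ c₀ (2 + ⌈log_p k_{i+1}⌉) + 1` and such that no integer
in `[k i, k (i+1))` is congruent to `λ` modulo `p^{⌈log_p k_{i+1}⌉}`. -/
theorem exists_good_sequence_not_padicInt
    {p : ℕ} [Fact p.Prime] {L : Type*} [NormedField L] [NormedAlgebra ℚ_[p] L]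
    [FiniteDimensional ℚ_[p] L]
    (c₀ : ℕ) (hc₀ : 1 ≤ c₀) (l : L)
    (hl : l ∉ Set.range (fun x : ℤ_[p] => algebraMap ℚ_[p] L (x : ℚ_[p]))) :
    ∃ k : ℕ → ℕ, StrictMono k ∧ (∀ i, 0 < k i) ∧
      ∀ i, c₀ * (2 + Nat.clog p (k (i + 1))) + 1 ≤ k i ∧
        ∀ n : ℤ, (k i : ℤ) ≤ n → n < (k (i + 1) : ℤ) →
          (p : ℝ) ^ (-(Nat.clog p (k (i + 1)) : ℤ)) < ‖l - (n : L)‖ := by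
  have hp : 1 < p := (Fact.out : p.Prime).one_lt
  -- the image of ℤ_p in L
  set f : ℤ_[p] → L := fun x => algebraMap ℚ_[p] L (x : ℚ_[p]) with hf
  have hiso : Isometry (fun x : ℤ_[p] => (x : ℚ_[p])) := fun x y => rfl
  have hcont : Continuous f := (continuous_algebraMap ℚ_[p] L).comp hiso.continuous
  have hclosed : IsClosed (Set.range f) := (isCompact_range hcont).isClosed
  set δ := Metric.infDist l (Set.range f) with hδ
  have hδpos : 0 < δ := (hclosed.notMem_iff_infDist_pos ⟨f 0, 0, rfl⟩).1 hl
  -- every integer lies in the image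
  have hmem : ∀ n : ℤ, (n : L) ∈ Set.range f := fun n =>
    ⟨(n : ℤ_[p]), by push_cast [hf]; simp⟩
  have hdist : ∀ n : ℤ, δ ≤ ‖l - (n : L)‖ := by
    intro n
    have := Metric.infDist_le_dist_of_mem (x := l) (hmem n)
    rwa [dist_eq_norm] at this
  -- choose m₀ with p^{-m₀} < δ
  have hplt : (1 / (p : ℝ)) < 1 := by
    rw [div_lt_one (by positivity)]
    exact_mod_cast hp
  obtain ⟨m₀, hm₀⟩ := exists_pow_lt_of_lt_one hδpos hplt
  have hm₀' : (p : ℝ) ^ (-(m₀ : ℤ)) < δ := by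
    rw [one_div, inv_pow] at hm₀
    rw [zpow_neg, zpow_natCast]
    exact hm₀
  set M := max (2 * c₀ + 6) m₀ with hM
  refine ⟨fun i => p ^ (M + i), ?_, ?_, ?_⟩
  · intro i j hij
    exact Nat.pow_lt_pow_right hp (by omega)
  · intro i; positivity
  · intro i
    have hclog : Nat.clog p (p ^ (M + (i + 1))) = M + (i + 1) := Nat.clog_pow p _ hp
    constructor
    · rw [hclog]
      have h1 : c₀ * (2 + (M + (i + 1))) + 1 = c₀ * ((M + i) + 3) + 1 := by ring_nf
      rw [h1]
      calc c₀ * ((M + i) + 3) + 1 ≤ 2 ^ (M + i) := lin_le_two_pow c₀ _ (by omega)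
        _ ≤ p ^ (M + i) := Nat.pow_le_pow_left hp (M + i)
    · intro n _ _
      rw [hclog]
      have hle : (-((M + (i + 1) : ℕ) : ℤ)) ≤ (-(m₀ : ℤ)) := by
        have : m₀ ≤ M + (i + 1) := le_trans (le_max_right (2 * c₀ + 6) m₀) (by omega)
        omega
      have h2 : (p : ℝ) ^ (-((M + (i + 1) : ℕ) : ℤ)) ≤ (p : ℝ) ^ (-(m₀ : ℤ)) :=
        zpow_le_zpow_right₀ (by exact_mod_cast hp.le) hle
      calc (p : ℝ) ^ (-((M + (i + 1) : ℕ) : ℤ)) ≤ (p : ℝ) ^ (-(m₀ : ℤ)) := h2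
        _ < δ := hm₀'
        _ ≤ ‖l - (n : L)‖ := hdist n
end

section
/- Let p be a prime and let μ be a Haar measure on the compact additive group ℤ_p, normalized so that μ(ℤ_p) = 1. Then the set of λ ∈ ℤ_p such that λ is not the image of any natural number and the quotient λ^{m}/m does not tend to infinity as m → ∞ has μ-measure zero. Equivalently, μ-almost every λ ∈ ℤ_p satisfies the paper's condition (*). -/
open MeasureTheory Filter
open scoped ENNReal NNReal

section Aux

variable {p : ℕ} [Fact p.Prime]

private lemma mem_ball_appr (l : ℤ_[p]) (m : ℕ) :
    ‖l - (l.appr m : ℤ_[p])‖ ≤ (p : ℝ) ^ (-(m : ℤ)) :=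
  (PadicInt.norm_le_pow_iff_mem_span_pow _ m).mpr (l.appr_spec m)

private lemma ball_disjoint {m k j : ℕ} (hk : k < p ^ m) (hj : j < p ^ m) (hkj : k ≠ j) :
    Disjoint {l : ℤ_[p] | ‖l - (k : ℤ_[p])‖ ≤ (p : ℝ) ^ (-(m : ℤ))}
      {l : ℤ_[p] | ‖l - (j : ℤ_[p])‖ ≤ (p : ℝ) ^ (-(m : ℤ))} := by
  rw [Set.disjoint_left]
  intro l hlk hlj
  have hsub : ((k : ℤ) - j : ℤ) ≠ 0 := sub_ne_zero.mpr (by exact_mod_cast hkj)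
  have h1 : ‖((k : ℤ_[p]) - j)‖ ≤ (p : ℝ) ^ (-(m : ℤ)) := by
    have : (k : ℤ_[p]) - j = (l - j) - (l - k) := by ring
    rw [this, sub_eq_add_neg]
    refine (PadicInt.nonarchimedean _ _).trans ?_
    rw [norm_neg]
    exact max_le hlj hlk
  have h2 : ((p : ℤ) ^ m) ∣ ((k : ℤ) - j) := by
    rw [← PadicInt.norm_int_le_pow_iff_dvd]
    push_cast
    exact h1
  have h3 : ((k : ℤ) - j) = 0 := by
    refine Int.eq_zero_of_abs_lt_dvd h2 ?_
    have hk' : (k : ℤ) < (p : ℤ) ^ m := by exact_mod_cast hk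
    have hj' : (j : ℤ) < (p : ℤ) ^ m := by exact_mod_cast hj
    have hk0 : (0 : ℤ) ≤ k := Int.natCast_nonneg k
    have hj0 : (0 : ℤ) ≤ j := Int.natCast_nonneg j
    rw [abs_sub_lt_iff]
    constructor <;> linarith
  exact hsub h3

end Aux

/-- Almost every `λ ∈ ℤ_p` (with respect to the normalized Haar measure) satisfies
condition (*): the set of `λ` that are not natural numbers and for which `λ^{m}/m` does not
tend to infinity has measure zero. -/
theorem measure_bad_set_eq_zero
    {p : ℕ} [Fact p.Prime] [MeasurableSpace ℤ_[p]] [BorelSpace ℤ_[p]]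
    (μ : Measure ℤ_[p]) [μ.IsAddHaarMeasure] (hμ : μ Set.univ = 1) :
    μ {l : ℤ_[p] |
        l ∉ Set.range ((↑·) : ℕ → ℤ_[p]) ∧
        ¬ Tendsto (fun m : ℕ => (l.appr m : ℝ) / (m : ℝ)) atTop atTop} = 0 := by
  classical
  have hp : 1 < p := (Fact.out : p.Prime).one_lt
  -- the balls
  set A : ℕ → ℕ → Set ℤ_[p] :=
    fun m k => {l : ℤ_[p] | ‖l - (k : ℤ_[p])‖ ≤ (p : ℝ) ^ (-(m : ℤ))} with hA
  have hAclosed : ∀ m k, IsClosed (A m k) := by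
    intro m k
    exact isClosed_le (by continuity) continuous_const
  have hAmeas : ∀ m k, MeasurableSet (A m k) := fun m k => (hAclosed m k).measurableSet
  -- translation invariance
  have hAmu : ∀ m k, μ (A m k) = μ (A m 0) := by
    intro m k
    have : A m k = (fun h => (-(k : ℤ_[p])) + h) ⁻¹' (A m 0) := by
      ext l
      simp only [hA, Set.mem_setOf_eq, Set.mem_preimage, Nat.cast_zero, sub_zero]
      rw [neg_add_eq_sub]
    rw [this, measure_preimage_add]
  -- measure of the base ball
  have hball : ∀ m : ℕ, μ (A m 0) = ((p : ℝ≥0∞) ^ m)⁻¹ := by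
    intro m
    have hdisj : (↑(Finset.range (p ^ m)) : Set ℕ).PairwiseDisjoint (A m) := by
      intro k hk j hj hkj
      simp only [Finset.coe_range, Set.mem_Iio] at hk hj
      exact ball_disjoint hk hj hkj
    have hcover : Set.univ = ⋃ k ∈ Finset.range (p ^ m), A m k := by
      apply Set.eq_of_subset_of_subset _ (Set.subset_univ _)
      intro l _
      refine Set.mem_biUnion ?_ (mem_ball_appr l m)
      exact Finset.mem_range.mpr (l.appr_lt m)
    have h1 : (1 : ℝ≥0∞) = ∑ k ∈ Finset.range (p ^ m), μ (A m k) := by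
      rw [← hμ, hcover, measure_biUnion_finset hdisj fun k _ => hAmeas m k]
    have h2 : (1 : ℝ≥0∞) = (p : ℝ≥0∞) ^ m * μ (A m 0) := by
      rw [h1, Finset.sum_congr rfl fun k _ => hAmu m k, Finset.sum_const,
        Finset.card_range, nsmul_eq_mul]
      push_cast
      ring
    exact ENNReal.eq_inv_of_mul_eq_one_left (by rw [mul_comm, ← h2])
  -- the covering sets
  set s : ℕ → ℕ → Set ℤ_[p] :=
    fun C m => ⋃ k ∈ Finset.range (C * m + 1), A m k with hs
  have hppos : (0 : ℝ≥0) < (p : ℝ≥0) := by exact_mod_cast Nat.zero_lt_of_lt hp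
  have hsmu : ∀ C m, μ (s C m) ≤ ((C * m + 1 : ℕ) : ℝ≥0∞) * ((p : ℝ≥0∞) ^ m)⁻¹ := by
    intro C m
    have heq : ∑ k ∈ Finset.range (C * m + 1), μ (A m k)
        = ((C * m + 1 : ℕ) : ℝ≥0∞) * ((p : ℝ≥0∞) ^ m)⁻¹ := by
      rw [Finset.sum_congr rfl fun k _ => by rw [hAmu m k, hball m],
        Finset.sum_const, Finset.card_range, nsmul_eq_mul]
    exact (measure_biUnion_finset_le _ _).trans heq.le
  have hsum : ∀ C : ℕ, (∑' m, μ (s C m)) ≠ ⊤ := by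
    intro C
    set g : ℕ → ℝ≥0 := fun m => ((C * m + 1 : ℕ) : ℝ≥0) * (((p : ℝ≥0)) ^ m)⁻¹ with hg
    have hcoe : ∀ m, ((C * m + 1 : ℕ) : ℝ≥0∞) * ((p : ℝ≥0∞) ^ m)⁻¹ = ((g m : ℝ≥0) : ℝ≥0∞) := by
      intro m
      rw [hg, ENNReal.coe_mul, ENNReal.coe_inv (pow_ne_zero m hppos.ne'), ENNReal.coe_pow]
      push_cast
      ring
    have hgsum : Summable g := by
      rw [← NNReal.summable_coe]
      have hr : ‖((p : ℝ))⁻¹‖ < 1 := by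
        rw [Real.norm_eq_abs, abs_of_nonneg (by positivity)]
        rw [inv_lt_one₀ (by exact_mod_cast Nat.zero_lt_of_lt hp)]
        exact_mod_cast hp
      have h1 : Summable (fun m : ℕ => (m : ℝ) * ((p : ℝ))⁻¹ ^ m) := by
        simpa using summable_pow_mul_geometric_of_norm_lt_one 1 hr
      have h2 : Summable (fun m : ℕ => ((p : ℝ))⁻¹ ^ m) :=
        summable_geometric_of_norm_lt_one hr
      have := (h1.mul_left (C : ℝ)).add h2
      refine this.congr fun m => ?_
      push_cast [hg]
      rw [← inv_pow]
      ring
    exact ne_top_of_le_ne_top (ENNReal.tsum_coe_ne_top_iff_summable.mpr hgsum)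
      (ENNReal.tsum_le_tsum fun m => (hsmu C m).trans_eq (hcoe m))
  -- inclusion into the union of limsups
  have hincl : {l : ℤ_[p] |
        l ∉ Set.range ((↑·) : ℕ → ℤ_[p]) ∧
        ¬ Tendsto (fun m : ℕ => (l.appr m : ℝ) / (m : ℝ)) atTop atTop}
      ⊆ ⋃ C : ℕ, limsup (s C) atTop := by
    intro l hl
    obtain ⟨-, hnt⟩ := hl
    rw [tendsto_atTop] at hnt
    push_neg at hnt
    obtain ⟨b, hb⟩ := hnt
    refine Set.mem_iUnion.mpr ⟨⌈b⌉₊, ?_⟩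
    rw [mem_limsup_iff_frequently_mem]
    refine (hb.and_eventually (eventually_ge_atTop 1)).mono ?_
    rintro m ⟨hm, hm1⟩
    have hm0 : (0 : ℝ) < m := by exact_mod_cast hm1
    have happr : (l.appr m : ℝ) < b * m := (div_lt_iff₀ hm0).mp hm
    have hle : l.appr m ≤ ⌈b⌉₊ * m := by
      have h4 : (l.appr m : ℝ) < ((⌈b⌉₊ * m : ℕ) : ℝ) := by
        push_cast
        exact happr.trans_le (mul_le_mul_of_nonneg_right (Nat.le_ceil b) hm0.le)
      exact Nat.le_of_lt (by exact_mod_cast h4)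
    exact Set.mem_biUnion (Finset.mem_range.mpr (by omega)) (mem_ball_appr l m)
  refine measure_mono_null hincl (measure_iUnion_null fun C => ?_)
  exact measure_limsup_atTop_eq_zero (hsum C)
end

section
/- Let A be a compact topological ring and let B be a normed ring whose norm is power-multiplicative, i.e. ‖b^n‖ = ‖b‖^n for every b ∈ B and every n ≥ 1. Then every continuous ring homomorphism φ : A → B satisfies ‖φ(a)‖ ≤ 1 for all a ∈ A; that is, the image of φ is contained in the closed unit ball of B. -/
/-- A continuous ring homomorphism from a compact topological ring to a normed ring with
power-multiplicative norm has image in the closed unit ball. -/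
theorem continuous_ringHom_image_le_one
    {A B : Type*} [Ring A] [TopologicalSpace A] [IsTopologicalRing A] [CompactSpace A]
    [NormedRing B]
    (hpm : ∀ (b : B) (n : ℕ), 1 ≤ n → ‖b ^ n‖ = ‖b‖ ^ n)
    (φ : A →+* B) (hφ : Continuous φ) :
    ∀ a : A, ‖φ a‖ ≤ 1 := by
  -- the continuous function a ↦ ‖φ a‖ is bounded on the compact space A
  obtain ⟨a₀, -, ha₀⟩ := isCompact_univ.exists_isMaxOn ⟨(1 : A), trivial⟩
    ((continuous_norm.comp hφ).continuousOn)
  set C := ‖φ a₀‖ with hC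
  intro a
  by_contra h
  push_neg at h
  obtain ⟨n, hn⟩ := pow_unbounded_of_one_lt C h
  have h1 : ‖φ a‖ ^ (n + 1) ≤ C := by
    have := ha₀ (Set.mem_univ (a ^ (n + 1)))
    simp only [Set.mem_setOf_eq, Function.comp_apply, map_pow] at this
    rwa [hpm (φ a) (n + 1) (Nat.le_add_left 1 n)] at this
  have h2 : C < ‖φ a‖ ^ (n + 1) :=
    lt_of_lt_of_le hn (pow_le_pow_right₀ h.le (Nat.le_succ n))
  exact absurd h1 (not_le.mpr h2)
end
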